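/- Two-stage instrumental ridge regression error bound (explicit deterministic form of the main theorem): Let λ > 0, c, η, ζ_xx, ζ_xy, ζ_yy, C > 0. Let Σ_x, Σ_y be symmetric positive semidefinite matrices, V a matrix with ‖V‖ ≤ 1 such that Σ_yx = Σ_y^{1/2} V Σ_x^{1/2}, and W a matrix with Σ_yx = W Σ_x. Let x̄_t, x̂_t ∈ ℝ^{d_x}, ȳ_t, ŷ_t ∈ ℝ^{d_y} (t = 1,…,N) satisfy ‖x̄_t‖ ≤ c, ‖ȳ_t‖ ≤ c, ‖x̂_t − x̄_t‖ ≤ η, ‖ŷ_t − ȳ_t‖ ≤ η, and suppose ‖(1/N)∑_t x̄_t x̄_tᵀ − Σ_x‖ ≤ ζ_xx, ‖(1/N)∑_t ȳ_t x̄_tᵀ − Σ_yx‖ ≤ ζ_xy, and ‖(1/N)∑_t ȳ_t ȳ_tᵀ‖ ≤ λ_max(Σ_y) + ζ_yy. Define Ŵ_λ = ((1/N)∑_t ŷ_t x̂_tᵀ)·((1/N)∑_t x̂_t x̂_tᵀ + λI)^{−1}. Then for every x_test = Σ_x^{1/2} v with ‖x_test‖ ≤ 1 and ‖v‖ ≤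 C: ‖Ŵ_λ x_test − W x_test‖ ≤ √(λ_max(Σ_y) + ζ_yy)·(2cη + η²)·λ^{−3/2} + (2cη + η²)/λ + √(λ_max(Σ_y))·ζ_xx·λ^{−3/2} + ζ_xy/λ + (1/2)·√λ·‖W‖_F·C. -/

import Mathlib

open scoped Matrix.Norms.L2Operator

/-- The positive semidefinite square root of a positive semidefinite matrix (the definition
`Matrix.PosSemidef.sqrt` of the older Mathlib, which has since been removed). -/
noncomputable def Matrix.PosSemidef.sqrt {n : Type*} [Fintype n] [DecidableEq n]
    {A : Matrix n n ℝ} (hA : A.PosSemidef) : Matrix n n ℝ :=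
  hA.1.eigenvectorUnitary.1 * Matrix.diagonal ((↑) ∘ Real.sqrt ∘ hA.1.eigenvalues) *
    (star hA.1.eigenvectorUnitary : Matrix n n ℝ)

/-- The largest eigenvalue of a real symmetric matrix, expressed as the supremum of the
Rayleigh quotient `⟪x, A x⟫` over the unit sphere of Euclidean space. -/
noncomputable def lamMax {n : Type*} [Fintype n] [DecidableEq n]
    (A : Matrix n n ℝ) : ℝ :=
  ⨆ x : Metric.sphere (0 : EuclideanSpace ℝ n) 1,
    inner (𝕜 := ℝ) (x : EuclideanSpace ℝ n) (Matrix.toEuclideanLin A x)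

/-- The Frobenius (Hilbert–Schmidt) norm of a real matrix. -/
noncomputable def frobNorm {m n : Type*} [Fintype m] [Fintype n]
    (A : Matrix m n ℝ) : ℝ :=
  Real.sqrt (∑ i, ∑ j, A i j ^ 2)

open Matrix

set_option linter.unusedSectionVars false
set_option linter.unusedVariables false
set_option linter.unnecessarySimpa false

lemma psd_sqrt_herm {n : Type*} [Fintype n] [DecidableEq n] {M : Matrix n n ℝ}
    (hM : M.PosSemidef) : hM.sqrt.IsHermitian := by
  unfold Matrix.PosSemidef.sqrt Matrix.IsHermitian
  simp [Matrix.conjTranspose_mul, Matrix.star_eq_conjTranspose, Matrix.diagonal_conjTranspose,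
    Matrix.mul_assoc]

lemma psd_sqrt_mul_self {n : Type*} [Fintype n] [DecidableEq n] {M : Matrix n n ℝ}
    (hM : M.PosSemidef) : hM.sqrt * hM.sqrt = M := by
  unfold Matrix.PosSemidef.sqrt
  have hU : (star hM.1.eigenvectorUnitary : Matrix n n ℝ) * hM.1.eigenvectorUnitary.1 = 1 :=
    Unitary.coe_star_mul_self _
  have hD : Matrix.diagonal ((fun x : ℝ => x) ∘ Real.sqrt ∘ hM.1.eigenvalues) *
      Matrix.diagonal ((fun x : ℝ => x) ∘ Real.sqrt ∘ hM.1.eigenvalues)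
      = Matrix.diagonal (RCLike.ofReal ∘ hM.1.eigenvalues) := by
    rw [Matrix.diagonal_mul_diagonal]
    congr 1
    funext i
    simp [Real.mul_self_sqrt (hM.eigenvalues_nonneg i)]
  conv_rhs => rw [hM.1.spectral_theorem, Unitary.conjStarAlgAut_apply]
  rw [← hD]
  simp only [Matrix.mul_assoc]
  rw [← Matrix.mul_assoc (star (hM.1.eigenvectorUnitary : Matrix n n ℝ)), hU, Matrix.one_mul]

variable {m n p : Type*} [Fintype m] [Fintype n] [Fintype p] [DecidableEq m] [DecidableEq n] [DecidableEq p]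

lemma norm_tEL_le (A : Matrix m n ℝ) (x : EuclideanSpace ℝ n) :
    ‖toEuclideanLin A x‖ ≤ ‖A‖ * ‖x‖ :=
  A.l2_opNorm_mulVec x

lemma opNorm_le_bound' (A : Matrix m n ℝ) {K : ℝ} (hK : 0 ≤ K)
    (h : ∀ x : EuclideanSpace ℝ n, ‖toEuclideanLin A x‖ ≤ K * ‖x‖) : ‖A‖ ≤ K := by
  rw [Matrix.l2_opNorm_def]
  exact ContinuousLinearMap.opNorm_le_bound _ hK h

lemma tEL_mul (A : Matrix m n ℝ) (B : Matrix n p ℝ) (x : EuclideanSpace ℝ p) :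
    toEuclideanLin (A * B) x = toEuclideanLin A (toEuclideanLin B x) := by
  simp [toEuclideanLin_apply, Matrix.mulVec_mulVec]

lemma inner_tEL (A : Matrix m n ℝ) (x : EuclideanSpace ℝ m) (y : EuclideanSpace ℝ n) :
    inner (𝕜 := ℝ) x (toEuclideanLin A y) = dotProduct (x : m → ℝ) (A *ᵥ (y : n → ℝ)) := by
  simp only [toEuclideanLin_apply, PiLp.inner_apply, dotProduct, RCLike.inner_apply,
    conj_trivial]
  exact Finset.sum_congr rfl fun _ _ => mul_comm _ _

lemma tEL_vecMulVec (a : EuclideanSpace ℝ m) (b : EuclideanSpace ℝ n) (x : EuclideanSpace ℝ n) :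
    toEuclideanLin (vecMulVec (a : m → ℝ) (b : n → ℝ)) x
      = (dotProduct (b : n → ℝ) (x : n → ℝ)) • a := by
  ext i
  simp only [toEuclideanLin_apply, PiLp.smul_apply, smul_eq_mul]
  show (vecMulVec (a : m → ℝ) (b : n → ℝ) *ᵥ (x : n → ℝ)) i = _
  simp only [Matrix.mulVec, vecMulVec_apply, dotProduct, Finset.sum_mul]
  exact Finset.sum_congr rfl fun j _ => by ring

lemma tEL_one (u : EuclideanSpace ℝ n) : toEuclideanLin (1 : Matrix n n ℝ) u = u := by
  ext i
  show ((1 : Matrix n n ℝ) *ᵥ (u : n → ℝ)) i = u i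
  simp [Matrix.one_mulVec]

lemma tEL_add_smul (M : Matrix n n ℝ) (lam : ℝ) (u : EuclideanSpace ℝ n) :
    toEuclideanLin (M + lam • (1 : Matrix n n ℝ)) u = toEuclideanLin M u + lam • u := by
  rw [map_add, _root_.map_smul]
  simp only [LinearMap.add_apply, LinearMap.smul_apply, tEL_one]

lemma four_lam_inner_le (lam : ℝ) (p u : EuclideanSpace ℝ n) :
    4 * lam * inner (𝕜 := ℝ) u p ≤ ‖p + lam • u‖ ^ 2 := by
  have e1 : ‖p + lam • u‖ ^ 2
      = ‖p‖ ^ 2 + 2 * (lam * inner (𝕜 := ℝ) p u) + lam ^ 2 * ‖u‖ ^ 2 := by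
    rw [norm_add_sq_real, real_inner_smul_right, norm_smul, Real.norm_eq_abs,
      mul_pow, sq_abs]
  have e2 : (0:ℝ) ≤ ‖p - lam • u‖ ^ 2 := sq_nonneg _
  have e3 : ‖p - lam • u‖ ^ 2
      = ‖p‖ ^ 2 - 2 * (lam * inner (𝕜 := ℝ) p u) + lam ^ 2 * ‖u‖ ^ 2 := by
    rw [norm_sub_sq_real, real_inner_smul_right, norm_smul, Real.norm_eq_abs,
      mul_pow, sq_abs]
  rw [real_inner_comm p u]
  linarith

lemma inner_tEL_nonneg {M : Matrix n n ℝ} (hM : M.PosSemidef) (u : EuclideanSpace ℝ n) :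
    0 ≤ inner (𝕜 := ℝ) u (toEuclideanLin M u) := by
  rw [inner_tEL]
  simpa using hM.dotProduct_mulVec_nonneg (u : n → ℝ)

lemma ridge_posDef {M : Matrix n n ℝ} (hM : M.PosSemidef) {lam : ℝ} (hlam : 0 < lam) :
    (M + lam • (1 : Matrix n n ℝ)).PosDef := by
  refine Matrix.PosDef.of_dotProduct_mulVec_pos (hM.1.add ?_) fun x hx => ?_
  · ext i j
    simp [Matrix.conjTranspose_apply, Matrix.one_apply, eq_comm]
  · have h1 : star x = x := by simp
    rw [h1, Matrix.add_mulVec, Matrix.smul_mulVec, Matrix.one_mulVec,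
      dotProduct_add, dotProduct_smul]
    have h2 : 0 ≤ x ⬝ᵥ M *ᵥ x := by simpa using hM.dotProduct_mulVec_nonneg x
    have h3 : 0 < x ⬝ᵥ x := by
      have := dotProduct_self_star_pos_iff (v := x)
      simp only [star_trivial] at this
      exact this.mpr hx
    have := mul_pos hlam h3
    simp only [smul_eq_mul]
    linarith

section Ridge

variable {M : Matrix n n ℝ} {lam : ℝ}

lemma ridge_isUnit_det (hM : M.PosSemidef) (hlam : 0 < lam) :
    IsUnit (M + lam • (1 : Matrix n n ℝ)).det :=
  isUnit_iff_ne_zero.mpr (ridge_posDef hM hlam).det_pos.ne'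

lemma ridge_apply_inv (hM : M.PosSemidef) (hlam : 0 < lam) (z : EuclideanSpace ℝ n) :
    toEuclideanLin (M + lam • (1 : Matrix n n ℝ))
      (toEuclideanLin (M + lam • (1 : Matrix n n ℝ))⁻¹ z) = z := by
  rw [← tEL_mul, Matrix.mul_nonsing_inv _ (ridge_isUnit_det hM hlam), tEL_one]

lemma ridge_inv_decomp (hM : M.PosSemidef) (hlam : 0 < lam) (z : EuclideanSpace ℝ n) :
    toEuclideanLin M (toEuclideanLin (M + lam • (1 : Matrix n n ℝ))⁻¹ z) +
      lam • (toEuclideanLin (M + lam • (1 : Matrix n n ℝ))⁻¹ z) = z := by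
  rw [← tEL_add_smul]
  exact ridge_apply_inv hM hlam z

lemma ridge_inv_norm_le (hM : M.PosSemidef) (hlam : 0 < lam) (z : EuclideanSpace ℝ n) :
    ‖toEuclideanLin (M + lam • (1 : Matrix n n ℝ))⁻¹ z‖ ≤ lam⁻¹ * ‖z‖ := by
  set u := toEuclideanLin (M + lam • (1 : Matrix n n ℝ))⁻¹ z with hu
  have hz := ridge_inv_decomp hM hlam z
  have h1 : 0 ≤ inner (𝕜 := ℝ) u (toEuclideanLin M u) := inner_tEL_nonneg hM u
  have e1 : ‖z‖ ^ 2 = ‖toEuclideanLin M u‖ ^ 2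
      + 2 * (lam * inner (𝕜 := ℝ) (toEuclideanLin M u) u) + lam ^ 2 * ‖u‖ ^ 2 := by
    rw [← hz, norm_add_sq_real, real_inner_smul_right, norm_smul, Real.norm_eq_abs,
      mul_pow, sq_abs]
  rw [real_inner_comm (toEuclideanLin M u) u] at h1
  have key : lam * ‖u‖ ≤ ‖z‖ := by
    nlinarith [norm_nonneg u, norm_nonneg z, sq_nonneg (‖toEuclideanLin M u‖),
      mul_nonneg hlam.le (mul_nonneg hlam.le (norm_nonneg u))]
  rw [inv_mul_eq_div, le_div_iff₀ hlam]
  linarith [key]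

lemma ridge_inv_inner_le (hM : M.PosSemidef) (hlam : 0 < lam) (z : EuclideanSpace ℝ n) :
    4 * lam * inner (𝕜 := ℝ) (toEuclideanLin (M + lam • (1 : Matrix n n ℝ))⁻¹ z)
      (toEuclideanLin M (toEuclideanLin (M + lam • (1 : Matrix n n ℝ))⁻¹ z)) ≤ ‖z‖ ^ 2 := by
  set u := toEuclideanLin (M + lam • (1 : Matrix n n ℝ))⁻¹ z with hu
  have hz := ridge_inv_decomp hM hlam z
  have := four_lam_inner_le lam (toEuclideanLin M u) u
  rw [hz] at this
  exact this

lemma norm_tEL_sqrt_sq (hM : M.PosSemidef) (u : EuclideanSpace ℝ n) :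
    ‖toEuclideanLin hM.sqrt u‖ ^ 2 = inner (𝕜 := ℝ) u (toEuclideanLin M u) := by
  have hsym : hM.sqrtᵀ = hM.sqrt := by
    rw [← Matrix.conjTranspose_eq_transpose_of_trivial]
    exact psd_sqrt_herm hM
  rw [← real_inner_self_eq_norm_sq, inner_tEL, inner_tEL]
  have hc : (toEuclideanLin hM.sqrt u : n → ℝ) = hM.sqrt *ᵥ (u : n → ℝ) := rfl
  rw [hc, Matrix.dotProduct_mulVec, ← Matrix.mulVec_transpose, hsym,
    Matrix.mulVec_mulVec, psd_sqrt_mul_self hM, dotProduct_comm]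

end Ridge

lemma le_of_sq_le_sq2 {a b : ℝ} (ha : 0 ≤ a) (hb : 0 ≤ b) (h : a ^ 2 ≤ b ^ 2) : a ≤ b := by
  nlinarith

lemma rayleigh_le_lamMax (A : Matrix n n ℝ) (z : EuclideanSpace ℝ n) :
    inner (𝕜 := ℝ) z (toEuclideanLin A z) ≤ lamMax A * ‖z‖ ^ 2 := by
  rcases eq_or_ne z 0 with rfl | hz
  · simp
  · have hbdd : BddAbove (Set.range fun x : Metric.sphere (0 : EuclideanSpace ℝ n) 1 =>
        inner (𝕜 := ℝ) (x : EuclideanSpace ℝ n) (toEuclideanLin A x)) := by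
      refine ⟨‖A‖, ?_⟩
      rintro r ⟨x, rfl⟩
      have hx : ‖(x : EuclideanSpace ℝ n)‖ = 1 := by
        have := x.2
        simpa [mem_sphere_iff_norm] using this
      calc inner (𝕜 := ℝ) (x : EuclideanSpace ℝ n) (toEuclideanLin A x)
          ≤ ‖(x : EuclideanSpace ℝ n)‖ * ‖toEuclideanLin A (x : EuclideanSpace ℝ n)‖ :=
            real_inner_le_norm _ _
        _ ≤ ‖(x : EuclideanSpace ℝ n)‖ * (‖A‖ * ‖(x : EuclideanSpace ℝ n)‖) := by
            gcongr; exact norm_tEL_le A _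
        _ = ‖A‖ := by rw [hx]; ring
    have hznorm : 0 < ‖z‖ := norm_pos_iff.mpr hz
    set w : EuclideanSpace ℝ n := ‖z‖⁻¹ • z with hwdef
    have hw : ‖w‖ = 1 := norm_smul_inv_norm hz
    have hmem : w ∈ Metric.sphere (0 : EuclideanSpace ℝ n) 1 := by
      simpa [mem_sphere_iff_norm] using hw
    have hle := le_ciSup hbdd (⟨w, hmem⟩ : Metric.sphere (0 : EuclideanSpace ℝ n) 1)
    have hcalc : inner (𝕜 := ℝ) w (toEuclideanLin A w)
        = ‖z‖⁻¹ * (‖z‖⁻¹ * inner (𝕜 := ℝ) z (toEuclideanLin A z)) := by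
      rw [hwdef, _root_.map_smul, real_inner_smul_left, real_inner_smul_right]
    rw [hcalc] at hle
    have h2 : lamMax A = ⨆ x : Metric.sphere (0 : EuclideanSpace ℝ n) 1,
        inner (𝕜 := ℝ) (x : EuclideanSpace ℝ n) (toEuclideanLin A x) := rfl
    rw [← h2] at hle
    have := mul_le_mul_of_nonneg_left hle (by positivity : (0:ℝ) ≤ ‖z‖ ^ 2)
    calc inner (𝕜 := ℝ) z (toEuclideanLin A z)
        = ‖z‖ ^ 2 * (‖z‖⁻¹ * (‖z‖⁻¹ * inner (𝕜 := ℝ) z (toEuclideanLin A z))) := by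
          field_simp
      _ ≤ ‖z‖ ^ 2 * lamMax A := this
      _ = lamMax A * ‖z‖ ^ 2 := by ring

lemma lamMax_nonneg {M : Matrix n n ℝ} (hM : M.PosSemidef) : 0 ≤ lamMax M := by
  cases isEmpty_or_nonempty n with
  | inl h =>
    have he : IsEmpty (Metric.sphere (0 : EuclideanSpace ℝ n) 1) := by
      constructor
      rintro ⟨x, hx⟩
      rw [mem_sphere_iff_norm] at hx
      have hx0 : x = 0 := Subsingleton.elim _ _
      rw [hx0] at hx
      norm_num at hx
    have : lamMax M = 0 := Real.iSup_of_isEmpty _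
    simp [this]
  | inr h =>
    obtain ⟨i⟩ := h
    set e : EuclideanSpace ℝ n := EuclideanSpace.single i (1:ℝ) with he
    have hne : ‖e‖ = 1 := by simp [he, EuclideanSpace.norm_single]
    have h1 := rayleigh_le_lamMax M e
    have h2 := inner_tEL_nonneg hM e
    rw [hne] at h1
    simpa using le_trans h2 h1

lemma norm_tEL_sqrt_le {M : Matrix n n ℝ} (hM : M.PosSemidef) (z : EuclideanSpace ℝ n) :
    ‖toEuclideanLin hM.sqrt z‖ ≤ Real.sqrt (lamMax M) * ‖z‖ := by
  refine le_of_sq_le_sq2 (norm_nonneg _) (by positivity) ?_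
  rw [norm_tEL_sqrt_sq hM z, mul_pow, Real.sq_sqrt (lamMax_nonneg hM)]
  exact rayleigh_le_lamMax M z

lemma ridge_sqrt_inv_norm_le {M : Matrix n n ℝ} (hM : M.PosSemidef) {lam : ℝ} (hlam : 0 < lam)
    (z : EuclideanSpace ℝ n) :
    ‖toEuclideanLin hM.sqrt (toEuclideanLin (M + lam • (1 : Matrix n n ℝ))⁻¹ z)‖ ≤
      (2 * Real.sqrt lam)⁻¹ * ‖z‖ := by
  have hs : 0 < Real.sqrt lam := Real.sqrt_pos.mpr hlam
  refine le_of_sq_le_sq2 (norm_nonneg _) (by positivity) ?_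
  rw [norm_tEL_sqrt_sq hM]
  have h := ridge_inv_inner_le hM hlam z
  have h4 : (2 * Real.sqrt lam) ^ 2 = 4 * lam := by
    rw [mul_pow, Real.sq_sqrt hlam.le]; norm_num
  have he : ((2 * Real.sqrt lam)⁻¹ * ‖z‖) ^ 2 = (4 * lam)⁻¹ * ‖z‖ ^ 2 := by
    rw [mul_pow, inv_pow, h4]
  rw [he]
  rw [inv_mul_eq_div, le_div_iff₀ (by positivity)]
  linarith

lemma ridge_opNorm_sqrt_inv {M : Matrix n n ℝ} (hM : M.PosSemidef) {lam : ℝ} (hlam : 0 < lam) :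
    ‖hM.sqrt * (M + lam • (1 : Matrix n n ℝ))⁻¹‖ ≤ (2 * Real.sqrt lam)⁻¹ := by
  have hs : 0 < Real.sqrt lam := Real.sqrt_pos.mpr hlam
  refine opNorm_le_bound' _ (by positivity) fun z => ?_
  rw [tEL_mul]
  exact ridge_sqrt_inv_norm_le hM hlam z

lemma ridge_inv_sqrt_norm_le {M : Matrix n n ℝ} (hM : M.PosSemidef) {lam : ℝ} (hlam : 0 < lam)
    (z : EuclideanSpace ℝ n) :
    ‖toEuclideanLin (M + lam • (1 : Matrix n n ℝ))⁻¹ (toEuclideanLin hM.sqrt z)‖ ≤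
      (2 * Real.sqrt lam)⁻¹ * ‖z‖ := by
  rw [← tEL_mul]
  have hMt : Mᵀ = M := by
    rw [← Matrix.conjTranspose_eq_transpose_of_trivial]; exact hM.1
  have hSt : hM.sqrtᵀ = hM.sqrt := by
    rw [← Matrix.conjTranspose_eq_transpose_of_trivial]; exact psd_sqrt_herm hM
  have htr : ((M + lam • (1 : Matrix n n ℝ))⁻¹ * hM.sqrt)
      = (hM.sqrt * (M + lam • (1 : Matrix n n ℝ))⁻¹)ᵀ := by
    rw [Matrix.transpose_mul, Matrix.transpose_nonsing_inv, Matrix.transpose_add,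
      Matrix.transpose_smul, Matrix.transpose_one, hMt, hSt]
  have hnorm : ‖(M + lam • (1 : Matrix n n ℝ))⁻¹ * hM.sqrt‖
      ≤ (2 * Real.sqrt lam)⁻¹ := by
    rw [htr, ← Matrix.conjTranspose_eq_transpose_of_trivial,
      Matrix.l2_opNorm_conjTranspose]
    exact ridge_opNorm_sqrt_inv hM hlam
  calc ‖toEuclideanLin ((M + lam • (1 : Matrix n n ℝ))⁻¹ * hM.sqrt) z‖
      ≤ ‖(M + lam • (1 : Matrix n n ℝ))⁻¹ * hM.sqrt‖ * ‖z‖ := norm_tEL_le _ _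
    _ ≤ (2 * Real.sqrt lam)⁻¹ * ‖z‖ :=
        mul_le_mul_of_nonneg_right hnorm (norm_nonneg _)

lemma opNorm_le_frobNorm' (A : Matrix m n ℝ) :
    ‖A‖ ≤ Real.sqrt (∑ i, ∑ j, A i j ^ 2) := by
  refine opNorm_le_bound' _ (Real.sqrt_nonneg _) fun x => ?_
  have hx : ∀ i, (toEuclideanLin A x) i = ∑ j, A i j * x j := fun i => rfl
  have h1 : ‖toEuclideanLin A x‖ = Real.sqrt (∑ i, (∑ j, A i j * x j) ^ 2) := by
    rw [EuclideanSpace.norm_eq]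
    congr 1
    refine Finset.sum_congr rfl fun i _ => ?_
    rw [hx i, Real.norm_eq_abs, sq_abs]
  rw [h1]
  have h2 : ∑ i, (∑ j, A i j * x j) ^ 2 ≤ (∑ i, ∑ j, A i j ^ 2) * (∑ j, (x j) ^ 2) := by
    rw [Finset.sum_mul]
    refine Finset.sum_le_sum fun i _ => ?_
    exact Finset.sum_mul_sq_le_sq_mul_sq Finset.univ _ _
  calc Real.sqrt (∑ i, (∑ j, A i j * x j) ^ 2)
      ≤ Real.sqrt ((∑ i, ∑ j, A i j ^ 2) * (∑ j, (x j) ^ 2)) := Real.sqrt_le_sqrt h2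
    _ = Real.sqrt (∑ i, ∑ j, A i j ^ 2) * Real.sqrt (∑ j, (x j) ^ 2) := by
        rw [Real.sqrt_mul (by positivity)]
    _ = Real.sqrt (∑ i, ∑ j, A i j ^ 2) * ‖x‖ := by
        congr 1
        rw [EuclideanSpace.norm_eq]
        congr 1
        refine Finset.sum_congr rfl fun j _ => ?_
        rw [Real.norm_eq_abs, sq_abs]

lemma inner_eq_dot (x y : EuclideanSpace ℝ n) :
    inner (𝕜 := ℝ) x y = dotProduct (x : n → ℝ) (y : n → ℝ) := by
  simp only [PiLp.inner_apply, RCLike.inner_apply, conj_trivial]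
  exact Finset.sum_congr rfl fun _ _ => mul_comm _ _

lemma tEL_smul (r : ℝ) (Mt : Matrix m n ℝ) (u : EuclideanSpace ℝ n) :
    toEuclideanLin (r • Mt) u = r • toEuclideanLin Mt u := by
  rw [_root_.map_smul]
  rfl

lemma tEL_sum {ι : Type*} (s : Finset ι) (f : ι → Matrix m n ℝ) (u : EuclideanSpace ℝ n) :
    toEuclideanLin (∑ t ∈ s, f t) u = ∑ t ∈ s, toEuclideanLin (f t) u := by
  rw [map_sum]
  simp

lemma tEL_emp {ι : Type*} (s : Finset ι) (r : ℝ) (y : ι → EuclideanSpace ℝ m)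
    (x : ι → EuclideanSpace ℝ n) (u : EuclideanSpace ℝ n) :
    toEuclideanLin (r • ∑ t ∈ s, vecMulVec (y t) (x t)) u
      = r • ∑ t ∈ s, (dotProduct (x t : n → ℝ) (u : n → ℝ)) • (y t) := by
  rw [tEL_smul, tEL_sum]
  congr 1
  exact Finset.sum_congr rfl fun t _ => tEL_vecMulVec _ _ _

lemma inner_emp_eq {ι : Type*} (s : Finset ι) (r : ℝ) (x : ι → EuclideanSpace ℝ n)
    (u : EuclideanSpace ℝ n) :
    inner (𝕜 := ℝ) u (toEuclideanLin (r • ∑ t ∈ s, vecMulVec (x t) (x t)) u)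
      = r * ∑ t ∈ s, (dotProduct (x t : n → ℝ) (u : n → ℝ)) ^ 2 := by
  rw [tEL_emp, real_inner_smul_right, inner_sum]
  congr 1
  refine Finset.sum_congr rfl fun t _ => ?_
  rw [real_inner_smul_right, inner_eq_dot, dotProduct_comm]
  ring

lemma emp_posSemidef {N : ℕ} (x : Fin N → EuclideanSpace ℝ n) :
    ((N:ℝ)⁻¹ • ∑ t, vecMulVec (x t) (x t) : Matrix n n ℝ).PosSemidef := by
  refine Matrix.PosSemidef.of_dotProduct_mulVec_nonneg ?_ ?_
  · ext i j
    simp only [Matrix.conjTranspose_apply, Matrix.smul_apply, Matrix.sum_apply,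
      vecMulVec_apply, star_trivial, smul_eq_mul]
    rw [Finset.mul_sum, Finset.mul_sum]
    exact Finset.sum_congr rfl fun t _ => by ring
  · intro z
    rw [star_trivial]
    have h1 := inner_emp_eq Finset.univ ((N:ℝ)⁻¹) x ((WithLp.equiv 2 (n → ℝ)).symm z)
    rw [inner_tEL] at h1
    have h2 : (0:ℝ) ≤ (N:ℝ)⁻¹ * ∑ t, (dotProduct (x t : n → ℝ)
        (((WithLp.equiv 2 (n → ℝ)).symm z : EuclideanSpace ℝ n) : n → ℝ)) ^ 2 := by
      positivity
    exact le_of_le_of_eq h2 h1.symm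

lemma norm_vecMulVec_le (a : EuclideanSpace ℝ m) (b : EuclideanSpace ℝ n) :
    ‖vecMulVec (a : m → ℝ) (b : n → ℝ)‖ ≤ ‖a‖ * ‖b‖ := by
  refine opNorm_le_bound' _ (by positivity) fun x => ?_
  rw [tEL_vecMulVec, norm_smul, Real.norm_eq_abs]
  have h : |dotProduct (b : n → ℝ) (x : n → ℝ)| ≤ ‖b‖ * ‖x‖ := by
    rw [← inner_eq_dot]
    exact abs_real_inner_le_norm b x
  calc |dotProduct (b : n → ℝ) (x : n → ℝ)| * ‖a‖ ≤ ‖b‖ * ‖x‖ * ‖a‖ :=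
        mul_le_mul_of_nonneg_right h (norm_nonneg a)
    _ = ‖a‖ * ‖b‖ * ‖x‖ := by ring

lemma vecMulVec_sub_decomp (a a' : EuclideanSpace ℝ m) (b b' : EuclideanSpace ℝ n) :
    vecMulVec (a' : m → ℝ) (b' : n → ℝ) - vecMulVec (a : m → ℝ) (b : n → ℝ)
      = vecMulVec ((a' - a : EuclideanSpace ℝ m) : m → ℝ) (b : n → ℝ)
        + vecMulVec (a : m → ℝ) ((b' - b : EuclideanSpace ℝ n) : n → ℝ)
        + vecMulVec ((a' - a : EuclideanSpace ℝ m) : m → ℝ)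
            ((b' - b : EuclideanSpace ℝ n) : n → ℝ) := by
  ext i j
  simp only [Matrix.sub_apply, Matrix.add_apply, vecMulVec_apply]
  have h1 : ((a' - a : EuclideanSpace ℝ m) : m → ℝ) i = a' i - a i := rfl
  have h2 : ((b' - b : EuclideanSpace ℝ n) : n → ℝ) j = b' j - b j := rfl
  rw [h1, h2]
  ring

lemma emp_diff_norm_le {N : ℕ} {c η : ℝ} (hc : 0 ≤ c) (hη : 0 ≤ η)
    (u uh : Fin N → EuclideanSpace ℝ m) (w wh : Fin N → EuclideanSpace ℝ n)
    (hu : ∀ t, ‖u t‖ ≤ c) (hw : ∀ t, ‖w t‖ ≤ c)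
    (hue : ∀ t, ‖uh t - u t‖ ≤ η) (hwe : ∀ t, ‖wh t - w t‖ ≤ η) :
    ‖(N:ℝ)⁻¹ • (∑ t, vecMulVec (uh t) (wh t)) - (N:ℝ)⁻¹ • (∑ t, vecMulVec (u t) (w t))‖
      ≤ 2 * c * η + η ^ 2 := by
  have hterm : ∀ t : Fin N, ‖vecMulVec (uh t) (wh t) - vecMulVec (u t) (w t)‖
      ≤ 2 * c * η + η ^ 2 := by
    intro t
    rw [vecMulVec_sub_decomp (u t) (uh t) (w t) (wh t)]
    calc ‖_ + _ + _‖
        ≤ ‖vecMulVec ((uh t - u t : EuclideanSpace ℝ m) : m → ℝ) ((w t : n → ℝ))‖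
          + ‖vecMulVec ((u t : m → ℝ)) ((wh t - w t : EuclideanSpace ℝ n) : n → ℝ)‖
          + ‖vecMulVec ((uh t - u t : EuclideanSpace ℝ m) : m → ℝ)
              ((wh t - w t : EuclideanSpace ℝ n) : n → ℝ)‖ :=
          norm_add₃_le
      _ ≤ η * c + c * η + η * η := by
          refine add_le_add (add_le_add ?_ ?_) ?_
          · exact le_trans (norm_vecMulVec_le _ _)
              (mul_le_mul (hue t) (hw t) (norm_nonneg _) hη)
          · exact le_trans (norm_vecMulVec_le _ _)
              (mul_le_mul (hu t) (hwe t) (norm_nonneg _) hc)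
          · exact le_trans (norm_vecMulVec_le _ _)
              (mul_le_mul (hue t) (hwe t) (norm_nonneg _) hη)
      _ = 2 * c * η + η ^ 2 := by ring
  rw [← smul_sub, ← Finset.sum_sub_distrib]
  have h1 : ‖(N:ℝ)⁻¹ • ∑ t, (vecMulVec (uh t) (wh t) - vecMulVec (u t) (w t))‖
      = (N:ℝ)⁻¹ * ‖∑ t, (vecMulVec (uh t) (wh t) - vecMulVec (u t) (w t))‖ := by
    rw [norm_smul, Real.norm_eq_abs, abs_of_nonneg (by positivity)]
  rw [h1]
  have h2 : ‖∑ t, (vecMulVec (uh t) (wh t) - vecMulVec (u t) (w t))‖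
      ≤ (N : ℝ) * (2 * c * η + η ^ 2) := by
    refine le_trans (norm_sum_le _ _) ?_
    have h3 := Finset.sum_le_card_nsmul Finset.univ
      (fun t => ‖vecMulVec (uh t) (wh t) - vecMulVec (u t) (w t)‖)
      (2 * c * η + η ^ 2) (fun t _ => hterm t)
    simp only [Finset.card_univ, Fintype.card_fin, nsmul_eq_mul] at h3
    exact h3
  rcases Nat.eq_zero_or_pos N with hN | hN
  · subst hN
    simp only [Nat.cast_zero, _root_.inv_zero, zero_mul]
    positivity
  · have hN0 : (N : ℝ) ≠ 0 := Nat.cast_ne_zero.mpr hN.ne'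
    calc (N:ℝ)⁻¹ * ‖∑ t, (vecMulVec (uh t) (wh t) - vecMulVec (u t) (w t))‖
        ≤ (N:ℝ)⁻¹ * ((N : ℝ) * (2 * c * η + η ^ 2)) := by
          exact mul_le_mul_of_nonneg_left h2 (by positivity)
      _ = 2 * c * η + η ^ 2 := by field_simp

lemma cross_bound {N : ℕ} (y : Fin N → EuclideanSpace ℝ m) (x : Fin N → EuclideanSpace ℝ n)
    (u : EuclideanSpace ℝ n) :
    ‖toEuclideanLin ((N:ℝ)⁻¹ • ∑ t, vecMulVec (y t) (x t)) u‖ ^ 2 ≤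
      ‖((N:ℝ)⁻¹ • ∑ t, vecMulVec (y t) (y t) : Matrix m m ℝ)‖ *
        inner (𝕜 := ℝ) u (toEuclideanLin ((N:ℝ)⁻¹ • ∑ t, vecMulVec (x t) (x t)) u) := by
  classical
  set Cy : Matrix m m ℝ := (N:ℝ)⁻¹ • ∑ t, vecMulVec (y t) (y t) with hCy
  set q : EuclideanSpace ℝ m := toEuclideanLin ((N:ℝ)⁻¹ • ∑ t, vecMulVec (y t) (x t)) u with hq
  set a : Fin N → ℝ := fun t => dotProduct (x t : n → ℝ) (u : n → ℝ) with ha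
  set b : Fin N → ℝ := fun t => inner (𝕜 := ℝ) q (y t) with hb
  have hqe : q = (N:ℝ)⁻¹ • ∑ t, a t • (y t) := tEL_emp _ _ _ _ _
  -- ⟪q, q⟫ = N⁻¹ * ∑ a t * b t
  have h1 : ‖q‖ ^ 2 = (N:ℝ)⁻¹ * ∑ t, a t * b t := by
    rw [← real_inner_self_eq_norm_sq]
    nth_rewrite 2 [hqe]
    rw [real_inner_smul_right, inner_sum]
    congr 1
    refine Finset.sum_congr rfl fun t _ => ?_
    rw [real_inner_smul_right]
  -- ⟪u, Cx u⟫ = N⁻¹ * ∑ a t ^ 2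
  have h2 : inner (𝕜 := ℝ) u (toEuclideanLin ((N:ℝ)⁻¹ • ∑ t, vecMulVec (x t) (x t)) u)
      = (N:ℝ)⁻¹ * ∑ t, a t ^ 2 := inner_emp_eq _ _ _ _
  -- ⟪q, Cy q⟫ = N⁻¹ * ∑ b t ^ 2
  have h3 : inner (𝕜 := ℝ) q (toEuclideanLin Cy q) = (N:ℝ)⁻¹ * ∑ t, b t ^ 2 := by
    rw [hCy, tEL_emp, real_inner_smul_right, inner_sum]
    congr 1
    refine Finset.sum_congr rfl fun t _ => ?_
    rw [real_inner_smul_right]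
    have : dotProduct (y t : m → ℝ) (q : m → ℝ) = b t := by
      simp only [hb]
      rw [inner_eq_dot, dotProduct_comm]
    rw [this]
    ring
  have h4 : inner (𝕜 := ℝ) q (toEuclideanLin Cy q) ≤ ‖Cy‖ * ‖q‖ ^ 2 := by
    calc inner (𝕜 := ℝ) q (toEuclideanLin Cy q) ≤ ‖q‖ * ‖toEuclideanLin Cy q‖ :=
          real_inner_le_norm _ _
      _ ≤ ‖q‖ * (‖Cy‖ * ‖q‖) := by
          exact mul_le_mul_of_nonneg_left (norm_tEL_le _ _) (norm_nonneg _)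
      _ = ‖Cy‖ * ‖q‖ ^ 2 := by ring
  have hCS := Finset.sum_mul_sq_le_sq_mul_sq Finset.univ a b
  have ha2 : (0:ℝ) ≤ (N:ℝ)⁻¹ * ∑ t, a t ^ 2 := by positivity
  have hb2 : (0:ℝ) ≤ (N:ℝ)⁻¹ * ∑ t, b t ^ 2 := by positivity
  have hX : (‖q‖ ^ 2) ^ 2 ≤ ((N:ℝ)⁻¹ * ∑ t, a t ^ 2) * ((N:ℝ)⁻¹ * ∑ t, b t ^ 2) := by
    rw [h1]
    calc ((N:ℝ)⁻¹ * ∑ t, a t * b t) ^ 2 = ((N:ℝ)⁻¹)^2 * (∑ t, a t * b t) ^ 2 := by ring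
      _ ≤ ((N:ℝ)⁻¹)^2 * ((∑ t, a t ^ 2) * (∑ t, b t ^ 2)) := by
          exact mul_le_mul_of_nonneg_left hCS (by positivity)
      _ = ((N:ℝ)⁻¹ * ∑ t, a t ^ 2) * ((N:ℝ)⁻¹ * ∑ t, b t ^ 2) := by ring
  -- combine: ‖q‖⁴ ≤ ⟪u,Cx u⟫ * ⟪q, Cy q⟫ ≤ ⟪u,Cx u⟫ * ‖Cy‖ ‖q‖²
  rw [h2]
  rcases eq_or_lt_of_le (sq_nonneg ‖q‖) with h0 | h0
  · rw [← h0]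
    positivity
  · have h5 : (‖q‖ ^ 2) ^ 2 ≤ ((N:ℝ)⁻¹ * ∑ t, a t ^ 2) * (‖Cy‖ * ‖q‖ ^ 2) := by
      refine le_trans hX ?_
      refine mul_le_mul_of_nonneg_left ?_ ha2
      rw [← h3]
      exact h4
    have h6 : ‖q‖ ^ 2 * ‖q‖ ^ 2 ≤ (‖Cy‖ * ((N:ℝ)⁻¹ * ∑ t, a t ^ 2)) * ‖q‖ ^ 2 := by
      have he : ((N:ℝ)⁻¹ * ∑ t, a t ^ 2) * (‖Cy‖ * ‖q‖ ^ 2)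
          = (‖Cy‖ * ((N:ℝ)⁻¹ * ∑ t, a t ^ 2)) * ‖q‖ ^ 2 := by ring
      calc ‖q‖ ^ 2 * ‖q‖ ^ 2 = (‖q‖ ^ 2) ^ 2 := by ring
        _ ≤ ((N:ℝ)⁻¹ * ∑ t, a t ^ 2) * (‖Cy‖ * ‖q‖ ^ 2) := h5
        _ = (‖Cy‖ * ((N:ℝ)⁻¹ * ∑ t, a t ^ 2)) * ‖q‖ ^ 2 := he
    exact le_of_mul_le_mul_right h6 h0


set_option maxHeartbeats 2000000 in
/-- **Two-stage instrumental ridge regression error bound** (explicit deterministic form of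
the main theorem). Under Stage-1 error bounds `η`, empirical covariance error bounds
`ζ_xx, ζ_xy, ζ_yy`, a factorization `Σ_yx = Σ_y^{1/2} V Σ_x^{1/2}` with `‖V‖ ≤ 1`, and
`Σ_yx = W Σ_x`, the Stage-2 ridge estimator `Ŵ_λ` satisfies, for every
`x_test = Σ_x^{1/2} v` with `‖x_test‖ ≤ 1` and `‖v‖ ≤ C`:
`‖Ŵ_λ x_test − W x_test‖ ≤ √(λ_max(Σ_y) + ζ_yy)·(2cη + η²)·λ^{−3/2} + (2cη + η²)/λ
+ √(λ_max(Σ_y))·ζ_xx·λ^{−3/2} + ζ_xy/λ + (1/2)·√λ·‖W‖_F·C`. -/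
theorem two_stage_ridge_error {dx dy N : ℕ}
    (lam c η ζxx ζxy ζyy C : ℝ)
    (hlam : 0 < lam) (hc : 0 < c) (hη : 0 < η)
    (hζxx : 0 < ζxx) (hζxy : 0 < ζxy) (hζyy : 0 < ζyy) (hC : 0 < C)
    (Sx : Matrix (Fin dx) (Fin dx) ℝ) (Sy : Matrix (Fin dy) (Fin dy) ℝ)
    (hSx : Sx.PosSemidef) (hSy : Sy.PosSemidef)
    (V : Matrix (Fin dy) (Fin dx) ℝ) (hV : ‖V‖ ≤ 1)
    (Syx : Matrix (Fin dy) (Fin dx) ℝ) (hSyx : Syx = hSy.sqrt * V * hSx.sqrt)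
    (W : Matrix (Fin dy) (Fin dx) ℝ) (hW : Syx = W * Sx)
    (xbar xhat : Fin N → EuclideanSpace ℝ (Fin dx))
    (ybar yhat : Fin N → EuclideanSpace ℝ (Fin dy))
    (hx : ∀ t, ‖xbar t‖ ≤ c) (hy : ∀ t, ‖ybar t‖ ≤ c)
    (hxe : ∀ t, ‖xhat t - xbar t‖ ≤ η) (hye : ∀ t, ‖yhat t - ybar t‖ ≤ η)
    (hcovx : ‖(N : ℝ)⁻¹ • (∑ t, Matrix.vecMulVec (xbar t) (xbar t)) - Sx‖ ≤ ζxx)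
    (hcovyx : ‖(N : ℝ)⁻¹ • (∑ t, Matrix.vecMulVec (ybar t) (xbar t)) - Syx‖ ≤ ζxy)
    (hcovy : ‖(N : ℝ)⁻¹ • (∑ t, Matrix.vecMulVec (ybar t) (ybar t))‖ ≤ lamMax Sy + ζyy)
    (What : Matrix (Fin dy) (Fin dx) ℝ)
    (hWhat : What = ((N : ℝ)⁻¹ • ∑ t, Matrix.vecMulVec (yhat t) (xhat t)) *
      ((N : ℝ)⁻¹ • (∑ t, Matrix.vecMulVec (xhat t) (xhat t)) + lam • 1)⁻¹) :
    ∀ v : EuclideanSpace ℝ (Fin dx), ∀ xtest : EuclideanSpace ℝ (Fin dx),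
      xtest = Matrix.toEuclideanLin hSx.sqrt v → ‖xtest‖ ≤ 1 → ‖v‖ ≤ C →
      ‖Matrix.toEuclideanLin What xtest - Matrix.toEuclideanLin W xtest‖ ≤
        Real.sqrt (lamMax Sy + ζyy) * (2 * c * η + η ^ 2) * lam ^ (-(3 : ℝ) / 2) +
          (2 * c * η + η ^ 2) / lam +
          Real.sqrt (lamMax Sy) * ζxx * lam ^ (-(3 : ℝ) / 2) + ζxy / lam +
          1 / 2 * Real.sqrt lam * frobNorm W * C := by
  intro v xtest hxtest hxn hvn
  unfold frobNorm
  classical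
  have hsl : 0 < Real.sqrt lam := Real.sqrt_pos.mpr hlam
  set Cxh : Matrix (Fin dx) (Fin dx) ℝ :=
    (N:ℝ)⁻¹ • ∑ t, Matrix.vecMulVec (xhat t) (xhat t) with hCxh
  set Cx : Matrix (Fin dx) (Fin dx) ℝ :=
    (N:ℝ)⁻¹ • ∑ t, Matrix.vecMulVec (xbar t) (xbar t) with hCx
  set Cyxh : Matrix (Fin dy) (Fin dx) ℝ :=
    (N:ℝ)⁻¹ • ∑ t, Matrix.vecMulVec (yhat t) (xhat t) with hCyxh
  set Cyx : Matrix (Fin dy) (Fin dx) ℝ :=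
    (N:ℝ)⁻¹ • ∑ t, Matrix.vecMulVec (ybar t) (xbar t) with hCyx
  set Cy : Matrix (Fin dy) (Fin dy) ℝ :=
    (N:ℝ)⁻¹ • ∑ t, Matrix.vecMulVec (ybar t) (ybar t) with hCyd
  have hPxh : Cxh.PosSemidef := hCxh ▸ emp_posSemidef xhat
  have hPx : Cx.PosSemidef := hCx ▸ emp_posSemidef xbar
  set A : Matrix (Fin dx) (Fin dx) ℝ := Cxh + lam • 1 with hA
  set B : Matrix (Fin dx) (Fin dx) ℝ := Cx + lam • 1 with hB
  set P : Matrix (Fin dx) (Fin dx) ℝ := Sx + lam • 1 with hP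
  have hA1 : A * A⁻¹ = 1 := Matrix.mul_nonsing_inv _ (ridge_isUnit_det hPxh hlam)
  have hA2 : A⁻¹ * A = 1 := Matrix.nonsing_inv_mul _ (ridge_isUnit_det hPxh hlam)
  have hB1 : B * B⁻¹ = 1 := Matrix.mul_nonsing_inv _ (ridge_isUnit_det hPx hlam)
  have hB2 : B⁻¹ * B = 1 := Matrix.nonsing_inv_mul _ (ridge_isUnit_det hPx hlam)
  have hP1 : P * P⁻¹ = 1 := Matrix.mul_nonsing_inv _ (ridge_isUnit_det hSx hlam)
  have hP2 : P⁻¹ * P = 1 := Matrix.nonsing_inv_mul _ (ridge_isUnit_det hSx hlam)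
  -- decomposition identities
  have hd1 : Cyx * B⁻¹ * (B - A) * A⁻¹ = Cyx * A⁻¹ - Cyx * B⁻¹ := by
    rw [Matrix.mul_sub, Matrix.sub_mul, Matrix.mul_assoc Cyx B⁻¹ B, hB2, Matrix.mul_one,
      Matrix.mul_assoc (Cyx * B⁻¹) A A⁻¹, hA1, Matrix.mul_one]
  have hd2 : Syx * P⁻¹ * (P - B) * B⁻¹ = Syx * B⁻¹ - Syx * P⁻¹ := by
    rw [Matrix.mul_sub, Matrix.sub_mul, Matrix.mul_assoc Syx P⁻¹ P, hP2, Matrix.mul_one,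
      Matrix.mul_assoc (Syx * P⁻¹) B B⁻¹, hB1, Matrix.mul_one]
  have hd3 : (-lam) • (W * P⁻¹) = Syx * P⁻¹ - W := by
    have hSxP : Sx = P - lam • (1 : Matrix (Fin dx) (Fin dx) ℝ) := by
      rw [hP]; abel
    rw [hW, hSxP, Matrix.mul_sub, Matrix.sub_mul, Matrix.mul_assoc W P P⁻¹, hP1,
      Matrix.mul_one, Matrix.mul_smul, Matrix.mul_one, Matrix.smul_mul, neg_smul]
    abel
  have hdecomp : What - W
      = (Cyxh - Cyx) * A⁻¹ + Cyx * B⁻¹ * (B - A) * A⁻¹ + (Cyx - Syx) * B⁻¹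
        + Syx * P⁻¹ * (P - B) * B⁻¹ + (-lam) • (W * P⁻¹) := by
    rw [hWhat, hd1, hd2, hd3, Matrix.sub_mul, Matrix.sub_mul]
    abel
  have hL : Matrix.toEuclideanLin What xtest - Matrix.toEuclideanLin W xtest
      = toEuclideanLin (What - W) xtest := by
    rw [map_sub, LinearMap.sub_apply]
  rw [hL, hdecomp]
  simp only [map_add, LinearMap.add_apply]
  have hce : (0:ℝ) ≤ 2 * c * η + η ^ 2 := by
    have h1 : (0:ℝ) ≤ 2 * c * η := by positivity
    nlinarith [sq_nonneg η]
  have hLy : (0:ℝ) ≤ lamMax Sy + ζyy := le_trans (norm_nonneg Cy) hcovy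
  -- inverse application bounds
  have hAinv : ‖toEuclideanLin A⁻¹ xtest‖ ≤ lam⁻¹ := by
    have h := ridge_inv_norm_le hPxh hlam xtest
    rw [← hA] at h
    calc ‖toEuclideanLin A⁻¹ xtest‖ ≤ lam⁻¹ * ‖xtest‖ := h
      _ ≤ lam⁻¹ * 1 := mul_le_mul_of_nonneg_left hxn (by positivity)
      _ = lam⁻¹ := mul_one _
  have hBinv : ‖toEuclideanLin B⁻¹ xtest‖ ≤ lam⁻¹ := by
    have h := ridge_inv_norm_le hPx hlam xtest
    rw [← hB] at h
    calc ‖toEuclideanLin B⁻¹ xtest‖ ≤ lam⁻¹ * ‖xtest‖ := h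
      _ ≤ lam⁻¹ * 1 := mul_le_mul_of_nonneg_left hxn (by positivity)
      _ = lam⁻¹ := mul_one _
  -- matrix difference bounds
  have hE1 : ‖Cyxh - Cyx‖ ≤ 2 * c * η + η ^ 2 := by
    rw [hCyxh, hCyx]
    exact emp_diff_norm_le hc.le hη.le ybar yhat xbar xhat hy hx hye hxe
  have hE2 : ‖B - A‖ ≤ 2 * c * η + η ^ 2 := by
    have he : B - A = Cx - Cxh := by rw [hA, hB]; abel
    rw [he, norm_sub_rev, hCxh, hCx]
    exact emp_diff_norm_le hc.le hη.le xbar xhat xbar xhat hx hx hxe hxe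
  have hPB : ‖P - B‖ ≤ ζxx := by
    have he : P - B = Sx - Cx := by rw [hP, hB]; abel
    rw [he, norm_sub_rev]
    exact hcovx
  -- term 1
  have hT1 : ‖toEuclideanLin ((Cyxh - Cyx) * A⁻¹) xtest‖ ≤ (2 * c * η + η ^ 2) * lam⁻¹ := by
    rw [tEL_mul]
    calc ‖toEuclideanLin (Cyxh - Cyx) (toEuclideanLin A⁻¹ xtest)‖
        ≤ ‖Cyxh - Cyx‖ * ‖toEuclideanLin A⁻¹ xtest‖ := norm_tEL_le _ _
      _ ≤ (2 * c * η + η ^ 2) * lam⁻¹ := mul_le_mul hE1 hAinv (norm_nonneg _) hce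
  -- term 3
  have hT3 : ‖toEuclideanLin ((Cyx - Syx) * B⁻¹) xtest‖ ≤ ζxy * lam⁻¹ := by
    rw [tEL_mul]
    calc ‖toEuclideanLin (Cyx - Syx) (toEuclideanLin B⁻¹ xtest)‖
        ≤ ‖Cyx - Syx‖ * ‖toEuclideanLin B⁻¹ xtest‖ := norm_tEL_le _ _
      _ ≤ ζxy * lam⁻¹ := mul_le_mul hcovyx hBinv (norm_nonneg _) hζxy.le
  -- term 2
  have hw2 : ‖toEuclideanLin ((B - A) * A⁻¹) xtest‖ ≤ (2 * c * η + η ^ 2) * lam⁻¹ := by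
    rw [tEL_mul]
    calc ‖toEuclideanLin (B - A) (toEuclideanLin A⁻¹ xtest)‖
        ≤ ‖B - A‖ * ‖toEuclideanLin A⁻¹ xtest‖ := norm_tEL_le _ _
      _ ≤ (2 * c * η + η ^ 2) * lam⁻¹ := mul_le_mul hE2 hAinv (norm_nonneg _) hce
  have hT2 : ‖toEuclideanLin (Cyx * B⁻¹ * (B - A) * A⁻¹) xtest‖
      ≤ Real.sqrt (lamMax Sy + ζyy) * ((2 * Real.sqrt lam)⁻¹ * ((2 * c * η + η ^ 2) * lam⁻¹)) := by
    have hassoc : Cyx * B⁻¹ * (B - A) * A⁻¹ = Cyx * (B⁻¹ * ((B - A) * A⁻¹)) := by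
      rw [Matrix.mul_assoc, Matrix.mul_assoc]
    rw [hassoc, tEL_mul, tEL_mul]
    set z2 := toEuclideanLin ((B - A) * A⁻¹) xtest with hz2
    set u2 := toEuclideanLin B⁻¹ z2 with hu2
    have hc1 := cross_bound ybar xbar u2
    rw [← hCyx, ← hCyd, ← hCx] at hc1
    have hinner := ridge_inv_inner_le hPx hlam z2
    rw [← hB, ← hu2] at hinner
    have hip0 : 0 ≤ inner (𝕜 := ℝ) u2 (toEuclideanLin Cx u2) := inner_tEL_nonneg hPx u2
    have hip : inner (𝕜 := ℝ) u2 (toEuclideanLin Cx u2) ≤ (4 * lam)⁻¹ * ‖z2‖ ^ 2 := by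
      rw [inv_mul_eq_div, le_div_iff₀ (by linarith : (0:ℝ) < 4 * lam)]
      linarith
    refine le_of_sq_le_sq2 (norm_nonneg _) (by positivity) ?_
    have hrhs : (Real.sqrt (lamMax Sy + ζyy) * ((2 * Real.sqrt lam)⁻¹
          * ((2 * c * η + η ^ 2) * lam⁻¹))) ^ 2
        = (lamMax Sy + ζyy) * ((4 * lam)⁻¹ * ((2 * c * η + η ^ 2) * lam⁻¹) ^ 2) := by
      have h4 : (2 * Real.sqrt lam) ^ 2 = 4 * lam := by
        rw [mul_pow, Real.sq_sqrt hlam.le]; norm_num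
      rw [mul_pow, Real.sq_sqrt hLy, mul_pow, inv_pow, h4]
    rw [hrhs]
    calc ‖toEuclideanLin Cyx u2‖ ^ 2
        ≤ ‖Cy‖ * inner (𝕜 := ℝ) u2 (toEuclideanLin Cx u2) := hc1
      _ ≤ (lamMax Sy + ζyy) * inner (𝕜 := ℝ) u2 (toEuclideanLin Cx u2) :=
          mul_le_mul_of_nonneg_right hcovy hip0
      _ ≤ (lamMax Sy + ζyy) * ((4 * lam)⁻¹ * ‖z2‖ ^ 2) :=
          mul_le_mul_of_nonneg_left hip hLy
      _ ≤ (lamMax Sy + ζyy) * ((4 * lam)⁻¹ * ((2 * c * η + η ^ 2) * lam⁻¹) ^ 2) := by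
          refine mul_le_mul_of_nonneg_left
            (mul_le_mul_of_nonneg_left ?_ (by positivity)) hLy
          exact pow_le_pow_left₀ (norm_nonneg _) hw2 2
  -- term 4
  have hT4 : ‖toEuclideanLin (Syx * P⁻¹ * (P - B) * B⁻¹) xtest‖
      ≤ Real.sqrt (lamMax Sy) * ((2 * Real.sqrt lam)⁻¹ * (ζxx * lam⁻¹)) := by
    have hw4 : ‖toEuclideanLin ((P - B) * B⁻¹) xtest‖ ≤ ζxx * lam⁻¹ := by
      rw [tEL_mul]
      calc ‖toEuclideanLin (P - B) (toEuclideanLin B⁻¹ xtest)‖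
          ≤ ‖P - B‖ * ‖toEuclideanLin B⁻¹ xtest‖ := norm_tEL_le _ _
        _ ≤ ζxx * lam⁻¹ := mul_le_mul hPB hBinv (norm_nonneg _) hζxx.le
    have hassoc : Syx * P⁻¹ * (P - B) * B⁻¹
        = hSy.sqrt * (V * (hSx.sqrt * (P⁻¹ * ((P - B) * B⁻¹)))) := by
      simp only [hSyx, Matrix.mul_assoc]
    rw [hassoc, tEL_mul, tEL_mul, tEL_mul, tEL_mul]
    have hstep : ‖toEuclideanLin hSx.sqrt
        (toEuclideanLin P⁻¹ (toEuclideanLin ((P - B) * B⁻¹) xtest))‖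
        ≤ (2 * Real.sqrt lam)⁻¹ * (ζxx * lam⁻¹) := by
      have h := ridge_sqrt_inv_norm_le hSx hlam (toEuclideanLin ((P - B) * B⁻¹) xtest)
      rw [← hP] at h
      calc ‖toEuclideanLin hSx.sqrt
            (toEuclideanLin P⁻¹ (toEuclideanLin ((P - B) * B⁻¹) xtest))‖
          ≤ (2 * Real.sqrt lam)⁻¹ * ‖toEuclideanLin ((P - B) * B⁻¹) xtest‖ := h
        _ ≤ (2 * Real.sqrt lam)⁻¹ * (ζxx * lam⁻¹) :=
            mul_le_mul_of_nonneg_left hw4 (by positivity)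
    calc ‖toEuclideanLin hSy.sqrt (toEuclideanLin V (toEuclideanLin hSx.sqrt
          (toEuclideanLin P⁻¹ (toEuclideanLin ((P - B) * B⁻¹) xtest))))‖
        ≤ Real.sqrt (lamMax Sy) * ‖toEuclideanLin V (toEuclideanLin hSx.sqrt
            (toEuclideanLin P⁻¹ (toEuclideanLin ((P - B) * B⁻¹) xtest)))‖ :=
          norm_tEL_sqrt_le hSy _
      _ ≤ Real.sqrt (lamMax Sy) * (‖V‖ * ‖toEuclideanLin hSx.sqrt
            (toEuclideanLin P⁻¹ (toEuclideanLin ((P - B) * B⁻¹) xtest))‖) :=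
          mul_le_mul_of_nonneg_left (norm_tEL_le _ _) (Real.sqrt_nonneg _)
      _ ≤ Real.sqrt (lamMax Sy) * (1 * ((2 * Real.sqrt lam)⁻¹ * (ζxx * lam⁻¹))) := by
          refine mul_le_mul_of_nonneg_left ?_ (Real.sqrt_nonneg _)
          exact mul_le_mul hV hstep (norm_nonneg _) (by norm_num)
      _ = Real.sqrt (lamMax Sy) * ((2 * Real.sqrt lam)⁻¹ * (ζxx * lam⁻¹)) := by
          rw [one_mul]
  -- term 5
  have hT5 : ‖toEuclideanLin ((-lam) • (W * P⁻¹)) xtest‖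
      ≤ lam * (Real.sqrt (∑ i, ∑ j, W i j ^ 2) * ((2 * Real.sqrt lam)⁻¹ * C)) := by
    rw [tEL_smul, norm_smul, Real.norm_eq_abs, abs_neg, abs_of_pos hlam, tEL_mul]
    have hPinv : ‖toEuclideanLin P⁻¹ xtest‖ ≤ (2 * Real.sqrt lam)⁻¹ * C := by
      rw [hxtest]
      have h := ridge_inv_sqrt_norm_le hSx hlam v
      rw [← hP] at h
      calc ‖toEuclideanLin P⁻¹ (toEuclideanLin hSx.sqrt v)‖
          ≤ (2 * Real.sqrt lam)⁻¹ * ‖v‖ := h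
        _ ≤ (2 * Real.sqrt lam)⁻¹ * C := mul_le_mul_of_nonneg_left hvn (by positivity)
    calc lam * ‖toEuclideanLin W (toEuclideanLin P⁻¹ xtest)‖
        ≤ lam * (‖W‖ * ‖toEuclideanLin P⁻¹ xtest‖) :=
          mul_le_mul_of_nonneg_left (norm_tEL_le _ _) hlam.le
      _ ≤ lam * (Real.sqrt (∑ i, ∑ j, W i j ^ 2) * ((2 * Real.sqrt lam)⁻¹ * C)) := by
          refine mul_le_mul_of_nonneg_left ?_ hlam.le
          exact mul_le_mul (opNorm_le_frobNorm' W) hPinv (norm_nonneg _) (Real.sqrt_nonneg _)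
  -- assemble
  refine le_trans (norm_add_le _ _) ?_
  refine le_trans (add_le_add_left (norm_add_le _ _) _) ?_
  refine le_trans (add_le_add_left (add_le_add_left (norm_add_le _ _) _) _) ?_
  refine le_trans (add_le_add_left (add_le_add_left (add_le_add_left
    (norm_add_le _ _) _) _) _) ?_
  refine le_trans (add_le_add (add_le_add (add_le_add (add_le_add hT1 hT2) hT3) hT4) hT5) ?_
  -- final algebra
  have hr32 : lam ^ (-(3:ℝ)/2) = (Real.sqrt lam)⁻¹ * lam⁻¹ := by
    have he : (-(3:ℝ)/2) = (-1 : ℝ) + -(1/2 : ℝ) := by norm_num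
    rw [he, Real.rpow_add hlam, Real.rpow_neg hlam.le, Real.rpow_neg hlam.le,
      Real.rpow_one, ← Real.sqrt_eq_rpow]
    ring
  have hb1 : (2 * c * η + η ^ 2) * lam⁻¹ = (2 * c * η + η ^ 2) / lam :=
    (div_eq_mul_inv _ _).symm
  have hb3 : ζxy * lam⁻¹ = ζxy / lam := (div_eq_mul_inv _ _).symm
  have hb2 : Real.sqrt (lamMax Sy + ζyy) * ((2 * Real.sqrt lam)⁻¹
        * ((2 * c * η + η ^ 2) * lam⁻¹))
      ≤ Real.sqrt (lamMax Sy + ζyy) * (2 * c * η + η ^ 2) * lam ^ (-(3:ℝ)/2) := by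
    rw [hr32, mul_inv]
    have h0 : 0 ≤ Real.sqrt (lamMax Sy + ζyy) * (2 * c * η + η ^ 2)
        * ((Real.sqrt lam)⁻¹ * lam⁻¹) := by
      have := Real.sqrt_nonneg (lamMax Sy + ζyy)
      positivity
    nlinarith [h0]
  have hb4 : Real.sqrt (lamMax Sy) * ((2 * Real.sqrt lam)⁻¹ * (ζxx * lam⁻¹))
      ≤ Real.sqrt (lamMax Sy) * ζxx * lam ^ (-(3:ℝ)/2) := by
    rw [hr32, mul_inv]
    have h0 : 0 ≤ Real.sqrt (lamMax Sy) * ζxx * ((Real.sqrt lam)⁻¹ * lam⁻¹) := by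
      positivity
    nlinarith [h0]
  have hb5 : lam * (Real.sqrt (∑ i, ∑ j, W i j ^ 2) * ((2 * Real.sqrt lam)⁻¹ * C))
      = 1 / 2 * Real.sqrt lam * Real.sqrt (∑ i, ∑ j, W i j ^ 2) * C := by
    have hss : Real.sqrt lam * Real.sqrt lam = lam := Real.mul_self_sqrt hlam.le
    have h2 : Real.sqrt lam * (2 * Real.sqrt lam)⁻¹ = 2⁻¹ := by
      rw [mul_inv, mul_comm (2:ℝ)⁻¹, ← mul_assoc, mul_inv_cancel₀ hsl.ne', one_mul]
    calc lam * (Real.sqrt (∑ i, ∑ j, W i j ^ 2) * ((2 * Real.sqrt lam)⁻¹ * C))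
        = (Real.sqrt lam * Real.sqrt lam)
            * (Real.sqrt (∑ i, ∑ j, W i j ^ 2) * ((2 * Real.sqrt lam)⁻¹ * C)) := by
          rw [hss]
      _ = (Real.sqrt lam * (2 * Real.sqrt lam)⁻¹)
            * (Real.sqrt lam * Real.sqrt (∑ i, ∑ j, W i j ^ 2) * C) := by ring
      _ = 2⁻¹ * (Real.sqrt lam * Real.sqrt (∑ i, ∑ j, W i j ^ 2) * C) := by rw [h2]
      _ = 1 / 2 * Real.sqrt lam * Real.sqrt (∑ i, ∑ j, W i j ^ 2) * C := by ring
  linarith [hb1, hb2, hb3, hb4, hb5]
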